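/- The circular symmetrization D* of an open set D ⊆ ℂ is open. -/

import Mathlib

open MeasureTheory

/-- The angular section of `D` at radius `t`: angles `θ ∈ [0, 2π)` with `t e^{iθ} ∈ D`. -/
def angSet (D : Set ℂ) (t : ℝ) : Set ℝ :=
  {θ : ℝ | θ ∈ Set.Ico (0 : ℝ) (2 * Real.pi) ∧ (t : ℂ) * Complex.exp (θ * Complex.I) ∈ D}

/-- The angular measure `|D(t)|` of the section of `D` at radius `t`. -/
noncomputable def angMeasure (D : Set ℂ) (t : ℝ) : ℝ :=
  (volume (angSet D t)).toReal

/-- The circular symmetrization `D*` of `D ⊆ ℂ`: its intersection with the circle `|z| = t`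
is the full circle if `D(t) = [0, 2π)`, empty if `D(t) = ∅`, and otherwise the centered arc
`{t e^{iθ} : |θ| < |D(t)|/2}`; moreover `0 ∈ D*` iff `0 ∈ D`. -/
noncomputable def circSym (D : Set ℂ) : Set ℂ :=
  {z : ℂ | (z = 0 ∧ (0 : ℂ) ∈ D) ∨
    (z ≠ 0 ∧
      (angSet D (‖z‖) = Set.Ico (0 : ℝ) (2 * Real.pi) ∨
        ((angSet D (‖z‖)).Nonempty ∧
          |Complex.arg z| < angMeasure D (‖z‖) / 2)))}

lemma measurableSet_angSet (D : Set ℂ) (hD : IsOpen D) (t : ℝ) :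
    MeasurableSet (angSet D t) := by
  have : angSet D t = Set.Ico (0 : ℝ) (2 * Real.pi) ∩
      (fun θ : ℝ => (t : ℂ) * Complex.exp (θ * Complex.I)) ⁻¹' D := rfl
  rw [this]
  exact measurableSet_Ico.inter (hD.preimage (by continuity)).measurableSet

lemma angSet_vol_ne_top (D : Set ℂ) (t : ℝ) : volume (angSet D t) ≠ ⊤ := by
  have h1 : volume (angSet D t) ≤ volume (Set.Ico (0 : ℝ) (2 * Real.pi)) :=
    measure_mono (fun θ hθ => hθ.1)
  have h2 : volume (Set.Ico (0 : ℝ) (2 * Real.pi)) < ⊤ := measure_Ico_lt_top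
  exact (lt_of_le_of_lt h1 h2).ne

lemma angMeasure_le (D : Set ℂ) (t : ℝ) : angMeasure D t ≤ 2 * Real.pi := by
  have h1 : volume (angSet D t) ≤ volume (Set.Ico (0 : ℝ) (2 * Real.pi)) :=
    measure_mono (fun θ hθ => hθ.1)
  rw [Real.volume_Ico] at h1
  refine ENNReal.toReal_le_of_le_ofReal (by positivity) ?_
  simpa using h1

/-- Lower semicontinuity of the angular measure, with nonemptiness. -/
lemma angMeasure_key (D : Set ℂ) (hD : IsOpen D) (t c : ℝ) (hc : 0 ≤ c)
    (h : c < angMeasure D t) :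
    ∃ δ > 0, ∀ t' : ℝ, |t' - t| < δ →
      (angSet D t').Nonempty ∧ c < angMeasure D t' := by
  have hfin := angSet_vol_ne_top D t
  have hlt : ENNReal.ofReal c < volume (angSet D t) := by
    rw [ENNReal.ofReal_lt_iff_lt_toReal hc hfin]; exact h
  obtain ⟨K, hKsub, hKc, hKlt⟩ :=
    (measurableSet_angSet D hD t).exists_lt_isCompact hlt
  -- tube lemma: find δ such that K ⊆ angSet D t' for |t' - t| < δ
  have hKD : ({t} : Set ℝ) ×ˢ K ⊆
      (fun p : ℝ × ℝ => (p.1 : ℂ) * Complex.exp (p.2 * Complex.I)) ⁻¹' D := by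
    rintro ⟨s, θ⟩ ⟨hs, hθ⟩
    simp only [Set.mem_singleton_iff] at hs
    subst hs
    exact (hKsub hθ).2
  obtain ⟨u, v, hu, hv, htu, hKv, huv⟩ :=
    generalized_tube_lemma isCompact_singleton hKc
      (hD.preimage (by continuity)) hKD
  obtain ⟨δ, hδ, hball⟩ := Metric.isOpen_iff.mp hu t (htu rfl)
  refine ⟨δ, hδ, fun t' ht' => ?_⟩
  have hKsub' : K ⊆ angSet D t' := by
    intro θ hθ
    refine ⟨(hKsub hθ).1, ?_⟩
    have : (t', θ) ∈ u ×ˢ v := ⟨hball (by simpa [Real.dist_eq] using ht'), hKv hθ⟩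
    exact huv this
  have hKne : K.Nonempty := by
    rw [Set.nonempty_iff_ne_empty]
    rintro rfl
    simp at hKlt
  refine ⟨hKne.mono hKsub', ?_⟩
  have hfin' := angSet_vol_ne_top D t'
  have : ENNReal.ofReal c < volume (angSet D t') :=
    lt_of_lt_of_le hKlt (measure_mono hKsub')
  rwa [ENNReal.ofReal_lt_iff_lt_toReal hc hfin'] at this

/-- If the section at radius `t > 0` is the full circle, so are nearby sections. -/
lemma angSet_full_key (D : Set ℂ) (hD : IsOpen D) (t : ℝ) (ht : 0 < t)
    (h : angSet D t = Set.Ico (0 : ℝ) (2 * Real.pi)) :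
    ∃ δ > 0, ∀ t' : ℝ, 0 ≤ t' → |t' - t| < δ →
      angSet D t' = Set.Ico (0 : ℝ) (2 * Real.pi) := by
  have hsub : Metric.sphere (0 : ℂ) t ⊆ D := by
    intro w hw
    have habs : ‖w‖ = t := by simpa using hw
    rcases le_or_gt 0 w.arg with hθ | hθ
    · have hmem : w.arg ∈ Set.Ico (0 : ℝ) (2 * Real.pi) :=
        ⟨hθ, lt_of_le_of_lt (Complex.arg_le_pi w)
          (by have := Real.pi_pos; linarith)⟩
      have := (h ▸ hmem : w.arg ∈ angSet D t)
      have hw' : (t : ℂ) * Complex.exp (w.arg * Complex.I) = w := by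
        rw [← habs]; exact_mod_cast Complex.norm_mul_exp_arg_mul_I w
      have h2 := this.2
      rwa [hw'] at h2
    · have hθ2 : w.arg + 2 * Real.pi ∈ Set.Ico (0 : ℝ) (2 * Real.pi) := by
        constructor
        · have := Complex.neg_pi_lt_arg w
          have := Real.pi_pos
          linarith
        · linarith
      have := (h ▸ hθ2 : w.arg + 2 * Real.pi ∈ angSet D t)
      have hexp : Complex.exp (((w.arg + 2 * Real.pi : ℝ) : ℂ) * Complex.I)
          = Complex.exp (w.arg * Complex.I) := by
        push_cast
        rw [add_mul, Complex.exp_add, Complex.exp_two_pi_mul_I, mul_one]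
      have hw' : (t : ℂ) * Complex.exp (((w.arg + 2 * Real.pi : ℝ) : ℂ) * Complex.I) = w := by
        rw [hexp, ← habs]; exact_mod_cast Complex.norm_mul_exp_arg_mul_I w
      have h2 := this.2
      rwa [hw'] at h2
  obtain ⟨δ, hδ, hthick⟩ :=
    (isCompact_sphere (0 : ℂ) t).exists_thickening_subset_open hD hsub
  refine ⟨δ, hδ, fun t' ht0 ht' => ?_⟩
  refine Set.Subset.antisymm (fun θ hθ => hθ.1) (fun θ hθ => ⟨hθ, ?_⟩)
  apply hthick
  rw [Metric.mem_thickening_iff]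
  refine ⟨(t : ℂ) * Complex.exp (θ * Complex.I), ?_, ?_⟩
  · simp [Complex.norm_exp_ofReal_mul_I, abs_of_pos ht]
  · rw [Complex.dist_eq]
    have : (t' : ℂ) * Complex.exp (θ * Complex.I) - (t : ℂ) * Complex.exp (θ * Complex.I)
        = ((t' - t : ℝ) : ℂ) * Complex.exp (θ * Complex.I) := by push_cast; ring
    rw [this, norm_mul, Complex.norm_exp_ofReal_mul_I, mul_one, Complex.norm_real, Real.norm_eq_abs]
    exact ht'

theorem stmt_5 (D : Set ℂ) (hD : IsOpen D) : IsOpen (circSym D) := by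
  rw [isOpen_iff_mem_nhds]
  intro z hz
  rcases hz with ⟨hz0, h0D⟩ | ⟨hz0, hcase⟩
  · -- z = 0 and 0 ∈ D
    subst hz0
    obtain ⟨ε, hε, hball⟩ := Metric.isOpen_iff.mp hD 0 h0D
    refine Filter.mem_of_superset (Metric.ball_mem_nhds 0 hε) ?_
    intro w hw
    have hwabs : ‖w‖ < ε := by
      simpa [Complex.dist_eq] using hw
    by_cases hw0 : w = 0
    · exact Or.inl ⟨hw0, h0D⟩
    · refine Or.inr ⟨hw0, Or.inl ?_⟩
      refine Set.Subset.antisymm (fun θ hθ => hθ.1) (fun θ hθ => ⟨hθ, hball ?_⟩)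
      have habs' : ‖((‖w‖ : ℂ) * Complex.exp (θ * Complex.I))‖
          = ‖w‖ := by
        simp [Complex.norm_exp_ofReal_mul_I, abs_of_nonneg (norm_nonneg w)]
      rw [Metric.mem_ball, Complex.dist_eq, sub_zero, habs']
      exact hwabs
  · set t := ‖z‖ with htdef
    have ht : 0 < t := by
      simpa [htdef] using (norm_pos_iff.mpr hz0)
    rcases hcase with hfull | ⟨hne, harg⟩
    · -- full-circle case
      obtain ⟨δ, hδ, hkey⟩ := angSet_full_key D hD t ht hfull
      set δ' := min δ t with hδ'def
      have hδ' : 0 < δ' := lt_min hδ ht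
      have hmem : ∀ᶠ w in nhds z, |‖w‖ - t| < δ' := by
        have hball : ∀ᶠ s in nhds t, |s - t| < δ' := by
          filter_upwards [Metric.ball_mem_nhds t hδ'] with s hs
          simpa [Real.dist_eq] using hs
        exact (continuous_norm.continuousAt (x := z)).eventually hball
      filter_upwards [hmem] with w hw
      have hwpos : 0 < ‖w‖ := by
        have h1 : δ' ≤ t := min_le_right _ _
        have := abs_lt.mp hw
        linarith [this.1]
      have hwne : w ≠ 0 := by
        intro h0; rw [h0] at hwpos; simp at hwpos
      refine Or.inr ⟨hwne, Or.inl ?_⟩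
      exact hkey _ (norm_nonneg w) (lt_of_lt_of_le hw (min_le_left _ _))
    · -- arc case
      have hαle : angMeasure D t ≤ 2 * Real.pi := angMeasure_le D t
      have hargabs : 0 ≤ |Complex.arg z| := abs_nonneg _
      set c := (|Complex.arg z| + angMeasure D t / 2) / 2 with hcdef
      have hc1 : |Complex.arg z| < c := by rw [hcdef]; linarith
      have hc2 : 2 * c < angMeasure D t := by rw [hcdef]; linarith
      have hc0 : 0 ≤ 2 * c := by rw [hcdef]; linarith
      obtain ⟨δ, hδ, hkey⟩ := angMeasure_key D hD t (2 * c) hc0 hc2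
      set δ' := min δ t with hδ'def
      have hδ' : 0 < δ' := lt_min hδ ht
      -- z is in the slit plane (arg z ≠ π)
      have hargne : Complex.arg z ≠ Real.pi := by
        intro hpi
        rw [hpi] at harg
        rw [abs_of_pos Real.pi_pos] at harg
        linarith
      have hslit : z ∈ Complex.slitPlane := by
        rw [Complex.mem_slitPlane_iff]
        by_contra hns
        push_neg at hns
        have hrelt : z.re < 0 :=
          hns.1.lt_of_ne (fun h => hz0 (Complex.ext (by simpa using h) (by simpa using hns.2)))
        exact hargne (Complex.arg_eq_pi_iff.mpr ⟨hrelt, hns.2⟩)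
      have hargcont : ContinuousAt Complex.arg z := Complex.continuousAt_arg hslit
      have h1 : ∀ᶠ w in nhds z, |Complex.arg w| < c := by
        have : ContinuousAt (fun w => |Complex.arg w|) z :=
          (continuous_abs.continuousAt).comp hargcont
        exact this.eventually_lt_const hc1
      have h2 : ∀ᶠ w in nhds z, |‖w‖ - t| < δ' := by
        have hball : ∀ᶠ s in nhds t, |s - t| < δ' := by
          filter_upwards [Metric.ball_mem_nhds t hδ'] with s hs
          simpa [Real.dist_eq] using hs
        exact (continuous_norm.continuousAt (x := z)).eventually hball
      filter_upwards [h1, h2] with w hw1 hw2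
      have hwpos : 0 < ‖w‖ := by
        have h1' : δ' ≤ t := min_le_right _ _
        have := abs_lt.mp hw2
        linarith [this.1]
      have hwne : w ≠ 0 := by
        intro h0; rw [h0] at hwpos; simp at hwpos
      obtain ⟨hne', hlt'⟩ := hkey _ (lt_of_lt_of_le hw2 (min_le_left _ _))
      exact Or.inr ⟨hwne, Or.inr ⟨hne', by linarith⟩⟩
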